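/- For every τ ∈ ℚ, the maps S^τ and C commute: S^τ ∘ C = C ∘ S^τ as ℚ-linear endomorphisms of H, where S^τ is the ℚ-algebra endomorphism of H with S^τ(e₀) = e₀ and S^τ(e₁) = e₁ + τe₀, and C is the ℚ-linear endomorphism of H defined on words by C(e_{a₁}⋯e_{a_r}) = ∑_{j=1}^{r} e_{a_{j+1}}⋯e_{a_r}·e_{a₁}⋯e_{a_j} (a₁,…,a_r ∈ {0,1}, with C(1) = 0). -/

import Mathlib

/- STATEMENT 9: S^τ ∘ C = C ∘ S^τ, where S^τ is the algebra endomorphism of H with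
S^τ(e₀)=e₀, S^τ(e₁)=e₁+τe₀, and C is the cyclic-sum operator
C(e_{a₁}⋯e_{a_r}) = ∑_{j=1}^r e_{a_{j+1}}⋯e_{a_r} e_{a₁}⋯e_{a_j}, C(1)=0. -/

noncomputable section

abbrev H : Type := FreeAlgebra ℚ (Fin 2)

def e0 : H := FreeAlgebra.ι ℚ 0
def e1 : H := FreeAlgebra.ι ℚ 1

/-- The word `e_{a₁}⋯e_{a_N}` of a list of letters. -/
def word (l : List (Fin 2)) : H := (l.map (FreeAlgebra.ι ℚ)).prod

/-- The ℚ-algebra endomorphism `S^τ` of `H`: `e₀ ↦ e₀`, `e₁ ↦ e₁ + τ e₀`. -/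
def Stau (τ : ℚ) : H →ₐ[ℚ] H :=
  FreeAlgebra.lift ℚ (fun i : Fin 2 => if i = 0 then e0 else e1 + τ • e0)

/-! ### Auxiliary lemmas -/

lemma word_nil : word [] = 1 := rfl

lemma word_cons (a : Fin 2) (l : List (Fin 2)) :
    word (a :: l) = FreeAlgebra.ι ℚ a * word l := by simp [word]

lemma word_append (u v : List (Fin 2)) : word (u ++ v) = word u * word v := by
  simp [word]

/-- Substitution matrix of `Stau`. -/
def gmat (τ : ℚ) : Fin 2 → Fin 2 → ℚ := fun a b =>
  if a = 0 then (if b = 0 then 1 else 0) else (if b = 0 then τ else 1)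

lemma Stau_ι (τ : ℚ) (a : Fin 2) :
    Stau τ (FreeAlgebra.ι ℚ a) = ∑ b : Fin 2, gmat τ a b • FreeAlgebra.ι ℚ b := by
  fin_cases a <;>
    simp [Stau, gmat, e0, e1, Fin.sum_univ_two, add_comm]

/-- Coefficient of word `m` in the expansion of `Stau (word l)`. -/
def cf (τ : ℚ) : List (Fin 2) → List (Fin 2) → ℚ
  | [], [] => 1
  | a :: u, b :: v => gmat τ a b * cf τ u v
  | _, _ => 0

lemma cf_append (τ : ℚ) :
    ∀ (u v u' v' : List (Fin 2)), u.length = v.length →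
      cf τ (u ++ u') (v ++ v') = cf τ u v * cf τ u' v'
  | [], [], u', v', _ => by simp [cf]
  | a :: u, b :: v, u', v', h => by
    simp only [List.length_cons, Nat.add_right_cancel_iff] at h
    simp only [List.cons_append, List.append_eq, cf, cf_append τ u v u' v' h, mul_assoc]
  | [], _ :: _, _, _, h => by simp at h
  | _ :: _, [], _, _, h => by simp at h

lemma cf_rotate (τ : ℚ) (l m : List (Fin 2)) (h : l.length = m.length)
    (k : ℕ) (hk : k ≤ l.length) :
    cf τ (l.rotate k) (m.rotate k) = cf τ l m := by
  rw [List.rotate_eq_drop_append_take hk, List.rotate_eq_drop_append_take (h ▸ hk)]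
  have hd : (l.drop k).length = (m.drop k).length := by simp [h]
  have ht : (l.take k).length = (m.take k).length := by simp [h]
  rw [cf_append τ _ _ _ _ hd]
  conv_rhs => rw [← List.take_append_drop k l, ← List.take_append_drop k m]
  rw [cf_append τ _ _ _ _ ht, mul_comm]

open Mathlib in
/-- Cons as an equivalence for vectors. -/
def vconsEquiv (n : ℕ) : Fin 2 × List.Vector (Fin 2) n ≃ List.Vector (Fin 2) (n + 1) where
  toFun p := p.1 ::ᵥ p.2
  invFun v := (v.head, v.tail)
  left_inv := by rintro ⟨b, m⟩; simp
  right_inv := fun v => by simp [List.Vector.cons_head_tail]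

open Mathlib in
/-- Expansion of `Stau` on words. -/
lemma Stau_word (τ : ℚ) (l : List (Fin 2)) :
    Stau τ (word l) =
      ∑ m : List.Vector (Fin 2) l.length, cf τ l m.toList • word m.toList := by
  induction l with
  | nil =>
    rw [word_nil, map_one]
    show (1 : H) = ∑ m : List.Vector (Fin 2) 0, cf τ [] m.toList • word m.toList
    rw [Fintype.sum_eq_single (List.Vector.nil : List.Vector (Fin 2) 0)
      (fun m hm => absurd (Subsingleton.elim m List.Vector.nil) hm)]
    simp [cf, word_nil, List.Vector.nil]
  | cons a l ih =>
    rw [word_cons, map_mul, Stau_ι, ih, Finset.sum_mul_sum]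
    rw [← Fintype.sum_prod_type']
    refine Fintype.sum_equiv (vconsEquiv l.length) _ _ ?_
    rintro ⟨b, m⟩
    have : ((vconsEquiv l.length) (b, m)).toList = b :: m.toList := rfl
    rw [this, word_cons]
    show (gmat τ a b • FreeAlgebra.ι ℚ b) * (cf τ l m.toList • word m.toList)
      = cf τ (a :: l) (b :: m.toList) • (FreeAlgebra.ι ℚ b * word m.toList)
    rw [smul_mul_smul_comm]
    rfl

open Mathlib in
lemma Stau_word' (τ : ℚ) {n : ℕ} (l : List (Fin 2)) (h : l.length = n) :
    Stau τ (word l) =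
      ∑ m : List.Vector (Fin 2) n, cf τ l m.toList • word m.toList := by
  subst h; exact Stau_word τ l

open Mathlib in
lemma key (τ : ℚ) (C : H →ₗ[ℚ] H)
    (hC : ∀ l : List (Fin 2),
      C (word l) = ∑ j ∈ Finset.range l.length, word (l.drop (j + 1)) * word (l.take (j + 1)))
    (l : List (Fin 2)) :
    Stau τ (C (word l)) = C (Stau τ (word l)) := by
  have rot : ∀ (m : List (Fin 2)), ∀ j ∈ Finset.range m.length,
      word (m.drop (j + 1)) * word (m.take (j + 1)) = word (m.rotate (j + 1)) := by
    intro m j hj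
    rw [Finset.mem_range] at hj
    rw [List.rotate_eq_drop_append_take (by omega), word_append]
  -- LHS
  rw [hC l, map_sum]
  have LHS : ∀ j ∈ Finset.range l.length,
      Stau τ (word (l.drop (j + 1)) * word (l.take (j + 1)))
        = ∑ m : List.Vector (Fin 2) l.length,
            cf τ (l.rotate (j + 1)) m.toList • word m.toList := by
    intro j hj
    rw [rot l j hj,
      Stau_word' τ _ (show (l.rotate (j + 1)).length = l.length from List.length_rotate _ _)]
  rw [Finset.sum_congr rfl LHS]
  -- RHS
  rw [Stau_word' τ l rfl, map_sum]
  have RHS : ∀ m : List.Vector (Fin 2) l.length,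
      C (cf τ l m.toList • word m.toList)
        = ∑ j ∈ Finset.range l.length, cf τ l m.toList • word (m.toList.rotate (j + 1)) := by
    intro m
    rw [map_smul, hC m.toList, m.toList_length, Finset.smul_sum]
    refine Finset.sum_congr rfl fun j hj => ?_
    rw [rot m.toList j (by rw [m.toList_length]; exact hj)]
  rw [Finset.sum_congr rfl fun m _ => RHS m]
  conv_rhs => rw [Finset.sum_comm]
  refine Finset.sum_congr rfl fun j hj => ?_
  rw [Finset.mem_range] at hj
  -- reindex by rotation
  let ρ : List.Vector (Fin 2) l.length → List.Vector (Fin 2) l.length := fun m =>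
    ⟨m.toList.rotate (j + 1), by rw [List.length_rotate, m.toList_length]⟩
  have hbij : Function.Bijective ρ := by
    refine Finite.injective_iff_bijective.mp fun m₁ m₂ hm => ?_
    apply List.Vector.toList_injective
    exact List.rotate_injective (j + 1) (congrArg Subtype.val hm)
  refine (Fintype.sum_bijective ρ hbij
    (fun m : List.Vector (Fin 2) l.length => cf τ l m.toList • word (m.toList.rotate (j + 1)))
    (fun m : List.Vector (Fin 2) l.length => cf τ (l.rotate (j + 1)) m.toList • word m.toList)
    fun m => ?_).symm
  show cf τ l m.toList • word (m.toList.rotate (j + 1))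
      = cf τ (l.rotate (j + 1)) (m.toList.rotate (j + 1)) • word (m.toList.rotate (j + 1))
  rw [cf_rotate τ l m.toList m.toList_length.symm (j + 1) (by omega)]

lemma span_words : Submodule.span ℚ (Set.range word) = ⊤ := by
  rw [Submodule.eq_top_iff']
  intro x
  induction x using FreeAlgebra.induction with
  | grade0 r =>
    rw [Algebra.algebraMap_eq_smul_one]
    exact Submodule.smul_mem _ r (Submodule.subset_span ⟨[], rfl⟩)
  | grade1 a =>
    refine Submodule.subset_span ⟨[a], ?_⟩
    simp [word]
  | mul x y hx hy =>
    have h2 : x * y ∈ Submodule.span ℚ (Set.range word) * Submodule.span ℚ (Set.range word) :=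
      Submodule.mul_mem_mul hx hy
    rw [Submodule.span_mul_span] at h2
    refine Submodule.span_le.mpr ?_ h2
    rintro z hz
    obtain ⟨a, ⟨u, rfl⟩, b, ⟨v, rfl⟩, rfl⟩ := hz
    exact Submodule.subset_span ⟨u ++ v, by simp [word_append]⟩
  | add x y hx hy => exact Submodule.add_mem _ hx hy

theorem stmt_9 (τ : ℚ)
    (C : H →ₗ[ℚ] H)
    (hC : ∀ l : List (Fin 2),
      C (word l) = ∑ j ∈ Finset.range l.length, word (l.drop (j + 1)) * word (l.take (j + 1))) :
    ∀ x : H, Stau τ (C x) = C (Stau τ x) := by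
  intro x
  have hx : x ∈ Submodule.span ℚ (Set.range word) := by rw [span_words]; trivial
  induction hx using Submodule.span_induction with
  | mem z hz => obtain ⟨l, rfl⟩ := hz; exact key τ C hC l
  | zero => simp
  | add a b _ _ ha hb => simp [map_add, ha, hb]
  | smul c a _ ha => simp [map_smul, ha]
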